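/- arXiv:1210.6628 — 2 statements merged into one kernel-verified Lean document; each statement's English description precedes it below -/
import Mathlib

section
/- Let n ≥ 4 and let t = diag(t₁, …, tₙ) be an invertible diagonal n×n complex matrix with t₂ = t₁⁻¹ and t₄ = t₃⁻¹ (so that the diagonal block diag(t₁, t₂, t₃, t₄) lies in the maximal torus of Sp(4, ℂ)). Then conjugation Ad(t): X ↦ t·X·t⁻¹ maps the subspace 𝔥 into itself, and the induced linear automorphism of the quotient vector space 𝔤𝔩(n, ℂ)/𝔥 has determinant (t₅·t₆···tₙ)⁴. In particular this determinant equals the fourth power of the determinant of the lower-right (n−4)×(n−4) block of t, verifying the determinant condition of the main theorem for the cone over the second secant variety of the Grassmannian Gr(2, n). -/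
open Matrix

/-- The standard `4×4` skew form `J₄`. -/
noncomputable def J4 : Matrix (Fin 4) (Fin 4) ℂ :=
  !![0, 1, 0, 0; -1, 0, 0, 0; 0, 0, 0, 1; 0, 0, -1, 0]

/-- The Lie algebra `𝔥 ⊂ 𝔤𝔩(n, ℂ)` of the stabiliser of `e₁∧f₁ + e₂∧f₂`:
matrices with vanishing lower-left `(n−4)×4` block whose upper-left `4×4`
block lies in `𝔰𝔭(4, ℂ)`. -/
noncomputable def hLie (n : ℕ) (hn : 4 ≤ n) : Submodule ℂ (Matrix (Fin n) (Fin n) ℂ) where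
  carrier := {X | (∀ i j : Fin n, 4 ≤ i.val → j.val < 4 → X i j = 0) ∧
    X.submatrix (Fin.castLE hn) (Fin.castLE hn) * J4 +
      J4 * (X.submatrix (Fin.castLE hn) (Fin.castLE hn))ᵀ = 0}
  zero_mem' := by
    refine ⟨fun i j _ _ => rfl, ?_⟩
    simp
  add_mem' := by
    rintro a b ⟨ha1, ha2⟩ ⟨hb1, hb2⟩
    refine ⟨fun i j hi hj => ?_, ?_⟩
    · simp [Matrix.add_apply, ha1 i j hi hj, hb1 i j hi hj]
    · have key : (a + b).submatrix (Fin.castLE hn) (Fin.castLE hn) =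
          a.submatrix (Fin.castLE hn) (Fin.castLE hn) +
            b.submatrix (Fin.castLE hn) (Fin.castLE hn) := rfl
      rw [key, Matrix.transpose_add, add_mul, mul_add]
      calc a.submatrix (Fin.castLE hn) (Fin.castLE hn) * J4 +
            b.submatrix (Fin.castLE hn) (Fin.castLE hn) * J4 +
            (J4 * (a.submatrix (Fin.castLE hn) (Fin.castLE hn))ᵀ +
              J4 * (b.submatrix (Fin.castLE hn) (Fin.castLE hn))ᵀ)
          = (a.submatrix (Fin.castLE hn) (Fin.castLE hn) * J4 +
              J4 * (a.submatrix (Fin.castLE hn) (Fin.castLE hn))ᵀ) +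
            (b.submatrix (Fin.castLE hn) (Fin.castLE hn) * J4 +
              J4 * (b.submatrix (Fin.castLE hn) (Fin.castLE hn))ᵀ) := by abel
        _ = 0 := by rw [ha2, hb2, add_zero]
  smul_mem' := by
    rintro c a ⟨ha1, ha2⟩
    refine ⟨fun i j hi hj => by simp [Matrix.smul_apply, ha1 i j hi hj], ?_⟩
    have key : (c • a).submatrix (Fin.castLE hn) (Fin.castLE hn) =
        c • a.submatrix (Fin.castLE hn) (Fin.castLE hn) := rfl
    rw [key, Matrix.transpose_smul, Matrix.smul_mul, Matrix.mul_smul,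
      ← smul_add, ha2, smul_zero]

namespace SecantAux

lemma J4_transpose : J4ᵀ = -J4 := by
  ext i j
  fin_cases i <;> fin_cases j <;> simp [J4, Matrix.vecHead, Matrix.vecTail]

lemma J4_mul_J4 : J4 * J4 = -1 := by
  ext i j
  fin_cases i <;> fin_cases j <;>
    simp [J4, Matrix.mul_apply, Fin.sum_univ_four, Matrix.one_apply, Matrix.vecHead, Matrix.vecTail]

lemma J4t_mul_J4 : J4ᵀ * J4 = 1 := by
  rw [J4_transpose, Matrix.neg_mul, J4_mul_J4, neg_neg]

lemma J4_mul_transpose (Y : Matrix (Fin 4) (Fin 4) ℂ) :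
    J4 * Yᵀ = -(Y * J4)ᵀ := by
  rw [Matrix.transpose_mul, J4_transpose, Matrix.neg_mul, neg_neg]

lemma cond_iff (Y : Matrix (Fin 4) (Fin 4) ℂ) :
    Y * J4 + J4 * Yᵀ = 0 ↔ ∀ a b, (Y * J4) a b = (Y * J4) b a := by
  rw [J4_mul_transpose, add_neg_eq_zero]
  constructor
  · intro h a b
    conv_lhs => rw [h]
    rfl
  · intro h
    ext a b
    exact (h b a).symm

lemma diag_inv_mul_J4 (s : Fin 4 → ℂ) (e1 : s 1 = (s 0)⁻¹) (e3 : s 3 = (s 2)⁻¹) :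
    (Matrix.diagonal fun a => (s a)⁻¹) * J4 = J4 * Matrix.diagonal s := by
  ext i j
  rw [Matrix.diagonal_mul, Matrix.mul_diagonal]
  fin_cases i <;> fin_cases j <;>
    simp_all [J4, Matrix.vecHead, Matrix.vecTail, inv_inv]

/-- The index type for the complement of `𝔥`. -/
abbrev Idx (n : ℕ) :=
  (Fin (n - 4) × Fin 4) ⊕ {p : Fin 4 × Fin 4 // p.1 < p.2}

/-- Embedding of `Fin (n-4)` as the last `n-4` indices. -/
def low {n : ℕ} (hn : 4 ≤ n) (i : Fin (n - 4)) : Fin n :=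
  ⟨i.val + 4, by omega⟩

/-- The projection cutting out `𝔥`. -/
noncomputable def piMap {n : ℕ} (hn : 4 ≤ n) :
    Matrix (Fin n) (Fin n) ℂ →ₗ[ℂ] (Idx n → ℂ) where
  toFun X := Sum.elim
    (fun p => X (low hn p.1) (Fin.castLE hn p.2))
    (fun q => (X.submatrix (Fin.castLE hn) (Fin.castLE hn) * J4) q.1.1 q.1.2
            - (X.submatrix (Fin.castLE hn) (Fin.castLE hn) * J4) q.1.2 q.1.1)
  map_add' X Y := by
    funext s
    rcases s with p | q
    · simp
    · simp [Matrix.submatrix_add, Matrix.add_mul, Matrix.add_apply]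
      ring
  map_smul' c X := by
    funext s
    rcases s with p | q
    · simp
    · simp [Matrix.submatrix_smul, Matrix.smul_mul, Matrix.smul_apply, smul_eq_mul]
      ring

lemma ker_piMap {n : ℕ} (hn : 4 ≤ n) :
    LinearMap.ker (piMap hn) = hLie n hn := by
  ext X
  simp only [LinearMap.mem_ker, hLie, Submodule.mem_mk, AddSubmonoid.mem_mk,
    AddSubsemigroup.mem_mk, Set.mem_setOf_eq]
  constructor
  · intro hX
    constructor
    · intro i j hi hj
      have := congrFun hX (Sum.inl (⟨i.val - 4, by omega⟩, ⟨j.val, hj⟩))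
      simpa [piMap, low, Fin.ext_iff, Nat.sub_add_cancel hi] using this
    · rw [cond_iff]
      intro a b
      rcases lt_trichotomy a b with hab | hab | hab
      · have := congrFun hX (Sum.inr ⟨(a, b), hab⟩)
        simp only [piMap, LinearMap.coe_mk, AddHom.coe_mk, Sum.elim_inr, Pi.zero_apply] at this
        exact sub_eq_zero.mp this
      · rw [hab]
      · have := congrFun hX (Sum.inr ⟨(b, a), hab⟩)
        simp only [piMap, LinearMap.coe_mk, AddHom.coe_mk, Sum.elim_inr, Pi.zero_apply] at this
        exact (sub_eq_zero.mp this).symm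
  · rintro ⟨h1, h2⟩
    funext s
    rcases s with p | q
    · exact h1 _ _ (by simp [low]) (by simp)
    · have := cond_iff _ |>.mp h2 q.1.1 q.1.2
      simp only [piMap, LinearMap.coe_mk, AddHom.coe_mk, Sum.elim_inr, Pi.zero_apply]
      rw [this, sub_self]

end SecantAux

namespace SecantAux

/-- The conjugation `Ad(t)`. -/
noncomputable def Ad {n : ℕ} (t : Fin n → ℂ) :
    Matrix (Fin n) (Fin n) ℂ →ₗ[ℂ] Matrix (Fin n) (Fin n) ℂ :=
  (LinearMap.mulLeft ℂ (Matrix.diagonal t)).comp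
    (LinearMap.mulRight ℂ (Matrix.diagonal fun i => (t i)⁻¹))

lemma Ad_entry {n : ℕ} (t : Fin n → ℂ) (X : Matrix (Fin n) (Fin n) ℂ) (i j : Fin n) :
    Ad t X i j = t i * (X i j * (t j)⁻¹) := by
  show (Matrix.diagonal t * (X * Matrix.diagonal fun i => (t i)⁻¹)) i j = _
  rw [Matrix.diagonal_mul, Matrix.mul_diagonal]

lemma Ad_submatrix {n : ℕ} (hn : 4 ≤ n) (t : Fin n → ℂ) (X : Matrix (Fin n) (Fin n) ℂ) :
    (Ad t X).submatrix (Fin.castLE hn) (Fin.castLE hn) =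
      Matrix.diagonal (fun a => t (Fin.castLE hn a)) *
        (X.submatrix (Fin.castLE hn) (Fin.castLE hn) *
          Matrix.diagonal fun a => (t (Fin.castLE hn a))⁻¹) := by
  ext a b
  rw [Matrix.submatrix_apply, Ad_entry, Matrix.diagonal_mul, Matrix.mul_diagonal,
    Matrix.submatrix_apply]

/-- The weight function. -/
noncomputable def wt {n : ℕ} (hn : 4 ≤ n) (t : Fin n → ℂ) : Idx n → ℂ :=
  Sum.elim (fun p => t (low hn p.1) * (t (Fin.castLE hn p.2))⁻¹)
    (fun q => t (Fin.castLE hn q.1.1) * t (Fin.castLE hn q.1.2))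

lemma pi_Ad {n : ℕ} (hn : 4 ≤ n) (t : Fin n → ℂ)
    (h1 : t (Fin.castLE hn 1) = (t (Fin.castLE hn 0))⁻¹)
    (h3 : t (Fin.castLE hn 3) = (t (Fin.castLE hn 2))⁻¹)
    (X : Matrix (Fin n) (Fin n) ℂ) :
    piMap hn (Ad t X) = fun s => wt hn t s * piMap hn X s := by
  have key : (Ad t X).submatrix (Fin.castLE hn) (Fin.castLE hn) * J4 =
      Matrix.diagonal (fun a => t (Fin.castLE hn a)) *
        (X.submatrix (Fin.castLE hn) (Fin.castLE hn) * J4) *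
          Matrix.diagonal (fun a => t (Fin.castLE hn a)) := by
    rw [Ad_submatrix hn t X, Matrix.mul_assoc, Matrix.mul_assoc,
      diag_inv_mul_J4 (fun a => t (Fin.castLE hn a)) h1 h3]
    simp [Matrix.mul_assoc]
  funext s
  rcases s with p | q
  · simp only [piMap, LinearMap.coe_mk, AddHom.coe_mk, Sum.elim_inl, wt]
    rw [Ad_entry]
    ring
  · simp only [piMap, LinearMap.coe_mk, AddHom.coe_mk, Sum.elim_inr, wt]
    rw [key, Matrix.mul_diagonal, Matrix.mul_diagonal, Matrix.diagonal_mul,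
      Matrix.diagonal_mul]
    ring

lemma surj_piMap {n : ℕ} (hn : 4 ≤ n) : Function.Surjective (piMap hn) := by
  intro y
  set A : Matrix (Fin 4) (Fin 4) ℂ :=
    Matrix.of fun a b => if h : a < b then y (Sum.inr ⟨(a, b), h⟩) else 0 with hA
  set U : Matrix (Fin 4) (Fin 4) ℂ := A * J4ᵀ with hU
  set X : Matrix (Fin n) (Fin n) ℂ := Matrix.of fun i j =>
    if hj : j.val < 4 then
      (if hi : i.val < 4 then U ⟨i.val, hi⟩ ⟨j.val, hj⟩
       else y (Sum.inl (⟨i.val - 4, by omega⟩, ⟨j.val, hj⟩)))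
    else 0 with hX
  refine ⟨X, ?_⟩
  have hsub : X.submatrix (Fin.castLE hn) (Fin.castLE hn) = U := by
    ext a b
    simp only [Matrix.submatrix_apply, hX, Matrix.of_apply]
    rw [dif_pos (by simpa using b.isLt), dif_pos (by simpa using a.isLt)]
    rfl
  funext s
  rcases s with p | q
  · simp only [piMap, LinearMap.coe_mk, AddHom.coe_mk, Sum.elim_inl, hX, Matrix.of_apply]
    have hlv : (low hn p.1).val = p.1.val + 4 := rfl
    rw [dif_pos (by simpa using (p.2).isLt), dif_neg (by simp [hlv])]
    refine congrArg y (congrArg Sum.inl (Prod.ext ?_ rfl))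
    rw [Fin.ext_iff]
    simp [hlv]
  · simp only [piMap, LinearMap.coe_mk, AddHom.coe_mk, Sum.elim_inr]
    rw [hsub, hU, Matrix.mul_assoc, J4t_mul_J4, Matrix.mul_one]
    obtain ⟨⟨a, b⟩, hab⟩ := q
    simp only [hA, Matrix.of_apply]
    rw [dif_pos hab, dif_neg (lt_asymm hab), sub_zero]

end SecantAux

namespace SecantAux

/-- Equivalence between the high indices and `Fin (n-4)`. -/
def lowEquiv {n : ℕ} (hn : 4 ≤ n) : {i : Fin n // 4 ≤ i.val} ≃ Fin (n - 4) where
  toFun q := ⟨q.1.val - 4, by have := q.1.isLt; have := q.2; omega⟩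
  invFun i := ⟨low hn i, by simp [low]⟩
  left_inv q := Subtype.ext (Fin.ext (by have := q.2; simp only [low]; omega))
  right_inv i := Fin.ext (by simp only [low]; omega)

lemma low_lowEquiv {n : ℕ} (hn : 4 ≤ n) (q : {i : Fin n // 4 ≤ i.val}) :
    low hn (lowEquiv hn q) = q.1 :=
  Fin.ext (by have := q.2; simp only [low, lowEquiv, Equiv.coe_fn_mk]; omega)

lemma prod_wt {n : ℕ} (hn : 4 ≤ n) (t : Fin n → ℂ) (ht : ∀ i, t i ≠ 0)
    (h1 : t (Fin.castLE hn 1) = (t (Fin.castLE hn 0))⁻¹)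
    (h3 : t (Fin.castLE hn 3) = (t (Fin.castLE hn 2))⁻¹) :
    ∏ s : Idx n, wt hn t s =
      (∏ i ∈ Finset.univ.filter fun i : Fin n => 4 ≤ i.val, t i) ^ 4 := by
  have hQ : ∏ j : Fin 4, t (Fin.castLE hn j) = 1 := by
    rw [Fin.prod_univ_four, h1, h3, mul_inv_cancel₀ (ht _), one_mul,
      mul_inv_cancel₀ (ht _)]
  have hA : (∏ p : Fin (n - 4) × Fin 4, (t (low hn p.1) * (t (Fin.castLE hn p.2))⁻¹)) =
      (∏ i : Fin (n - 4), t (low hn i)) ^ 4 := by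
    rw [Fintype.prod_prod_type]
    have step : ∀ i : Fin (n - 4),
        (∏ j : Fin 4, (t (low hn i) * (t (Fin.castLE hn j))⁻¹)) = (t (low hn i)) ^ 4 := by
      intro i
      rw [Finset.prod_mul_distrib, Finset.prod_const, Finset.prod_inv_distrib, hQ,
        inv_one, mul_one, Finset.card_univ, Fintype.card_fin]
    rw [Finset.prod_congr rfl fun i _ => step i, ← Finset.prod_pow]
  have hB : (∏ q : {p : Fin 4 × Fin 4 // p.1 < p.2},
      (t (Fin.castLE hn q.1.1) * t (Fin.castLE hn q.1.2))) = 1 := by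
    set e : Fin 6 → {p : Fin 4 × Fin 4 // p.1 < p.2} :=
      ![⟨(0, 1), by decide⟩, ⟨(0, 2), by decide⟩, ⟨(0, 3), by decide⟩,
        ⟨(1, 2), by decide⟩, ⟨(1, 3), by decide⟩, ⟨(2, 3), by decide⟩] with he
    have hbij : Function.Bijective e := by decide
    have key : (∏ q : {p : Fin 4 × Fin 4 // p.1 < p.2},
        (t (Fin.castLE hn q.1.1) * t (Fin.castLE hn q.1.2))) =
        (t (Fin.castLE hn 0) * t (Fin.castLE hn 1)) *
          (t (Fin.castLE hn 0) * t (Fin.castLE hn 2)) *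
          (t (Fin.castLE hn 0) * t (Fin.castLE hn 3)) *
          (t (Fin.castLE hn 1) * t (Fin.castLE hn 2)) *
          (t (Fin.castLE hn 1) * t (Fin.castLE hn 3)) *
          (t (Fin.castLE hn 2) * t (Fin.castLE hn 3)) := by
      rw [← Fintype.prod_equiv (Equiv.ofBijective e hbij)
        (fun i => t (Fin.castLE hn (e i).1.1) * t (Fin.castLE hn (e i).1.2))
        (fun q => t (Fin.castLE hn q.1.1) * t (Fin.castLE hn q.1.2)) (fun i => rfl),
        Fin.prod_univ_six]
      rfl
    rw [key, h1, h3]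
    have h0 := ht (Fin.castLE hn 0)
    have h2 := ht (Fin.castLE hn 2)
    field_simp
  have hC : (∏ i ∈ Finset.univ.filter fun i : Fin n => 4 ≤ i.val, t i) =
      ∏ i : Fin (n - 4), t (low hn i) := by
    rw [Finset.prod_subtype (p := fun i : Fin n => 4 ≤ i.val)
      (Finset.univ.filter fun i : Fin n => 4 ≤ i.val) (by simp) t]
    exact Fintype.prod_equiv (lowEquiv hn) (fun q => t q.1) (fun i => t (low hn i))
      (fun q => congrArg t (low_lowEquiv hn q).symm)
  rw [Fintype.prod_sum_type]
  simp only [wt, Sum.elim_inl, Sum.elim_inr]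
  rw [hA, hB, mul_one, hC]

end SecantAux

namespace SecantAux

lemma det_pi_smul {ι : Type*} [Fintype ι] [DecidableEq ι] (d : ι → ℂ) :
    LinearMap.det (LinearMap.pi fun s => d s • LinearMap.proj s :
      (ι → ℂ) →ₗ[ℂ] (ι → ℂ)) = ∏ s, d s := by
  rw [← LinearMap.det_toMatrix (Pi.basisFun ℂ ι)]
  have h : LinearMap.toMatrix (Pi.basisFun ℂ ι) (Pi.basisFun ℂ ι)
      (LinearMap.pi fun s => d s • LinearMap.proj s) = Matrix.diagonal d := by
    ext i j
    simp [LinearMap.toMatrix_apply, Matrix.diagonal, Pi.single_apply]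
  rw [h, Matrix.det_diagonal]

end SecantAux


open SecantAux in
/-- For `t = diag(t₁, …, tₙ)` in the restricted torus (so `t₂ = t₁⁻¹`, `t₄ = t₃⁻¹`),
conjugation `Ad(t) : X ↦ t·X·t⁻¹` maps `𝔥` into itself and the induced linear
automorphism of `𝔤𝔩(n, ℂ)/𝔥` has determinant `(t₅·t₆···tₙ)⁴`. -/
theorem det_restricted_torus_on_tangent_space_of_secant_variety
    {n : ℕ} (hn : 4 ≤ n) (t : Fin n → ℂ) (ht : ∀ i, t i ≠ 0)
    (h1 : t ⟨1, by omega⟩ = (t ⟨0, by omega⟩)⁻¹)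
    (h3 : t ⟨3, by omega⟩ = (t ⟨2, by omega⟩)⁻¹) :
    ∃ h : hLie n hn ≤ (hLie n hn).comap
        ((LinearMap.mulLeft ℂ (Matrix.diagonal t)).comp
          (LinearMap.mulRight ℂ (Matrix.diagonal fun i => (t i)⁻¹))),
      LinearMap.det ((hLie n hn).mapQ (hLie n hn)
          ((LinearMap.mulLeft ℂ (Matrix.diagonal t)).comp
            (LinearMap.mulRight ℂ (Matrix.diagonal fun i => (t i)⁻¹))) h) =
        (∏ i ∈ Finset.univ.filter fun i : Fin n => 4 ≤ i.val, t i) ^ 4 := by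
  classical
  have h1' : t (Fin.castLE hn 1) = (t (Fin.castLE hn 0))⁻¹ := h1
  have h3' : t (Fin.castLE hn 3) = (t (Fin.castLE hn 2))⁻¹ := h3
  set F := ((LinearMap.mulLeft ℂ (Matrix.diagonal t)).comp
    (LinearMap.mulRight ℂ (Matrix.diagonal fun i => (t i)⁻¹))) with hFdef
  have hFAd : F = Ad t := rfl
  have hle : hLie n hn ≤ (hLie n hn).comap F := by
    intro X hX
    have hXk : piMap hn X = 0 := by
      rw [← ker_piMap hn] at hX
      exact hX
    have : piMap hn (F X) = 0 := by
      rw [hFAd, pi_Ad hn t h1' h3' X, hXk]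
      funext s
      simp
    have hmem : F X ∈ LinearMap.ker (piMap hn) := this
    rw [ker_piMap hn] at hmem
    exact hmem
  refine ⟨hle, ?_⟩
  have hker_le : hLie n hn ≤ LinearMap.ker (piMap hn) := (ker_piMap hn).ge
  set L := (hLie n hn).liftQ (piMap hn) hker_le with hL
  have hLinj : Function.Injective L := by
    rw [← LinearMap.ker_eq_bot]
    exact Submodule.ker_liftQ_eq_bot _ _ _ (ker_piMap hn).le
  have hLsurj : Function.Surjective L := by
    intro y
    obtain ⟨X, hXy⟩ := surj_piMap hn y
    exact ⟨Submodule.Quotient.mk X, by rwa [hL, Submodule.liftQ_apply]⟩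
  set e := LinearEquiv.ofBijective L ⟨hLinj, hLsurj⟩ with hedef
  set S : (Idx n → ℂ) →ₗ[ℂ] (Idx n → ℂ) :=
    LinearMap.pi fun s => wt hn t s • LinearMap.proj s with hS
  have hcomm : (e : _ →ₗ[ℂ] _) ∘ₗ (hLie n hn).mapQ (hLie n hn) F hle
      = S ∘ₗ (e : _ →ₗ[ℂ] _) := by
    apply Submodule.linearMap_qext
    apply LinearMap.ext
    intro X
    simp only [LinearMap.comp_apply, Submodule.mkQ_apply, Submodule.mapQ_apply]
    show e (Submodule.Quotient.mk (F X)) = S (e (Submodule.Quotient.mk X))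
    have he1 : e (Submodule.Quotient.mk (F X)) = piMap hn (F X) := by
      rfl
    have he2 : e (Submodule.Quotient.mk X) = piMap hn X := by
      rfl
    rw [he1, he2, hFAd, pi_Ad hn t h1' h3' X]
    funext s
    simp [hS, smul_eq_mul]
  have hconj : (e : _ →ₗ[ℂ] _) ∘ₗ ((hLie n hn).mapQ (hLie n hn) F hle)
      ∘ₗ (e.symm : _ →ₗ[ℂ] _) = S := by
    apply LinearMap.ext
    intro y
    have := LinearMap.congr_fun hcomm (e.symm y)
    simpa using this
  rw [← LinearMap.det_conj ((hLie n hn).mapQ (hLie n hn) F hle) e, hconj, hS,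
    det_pi_smul]
  exact prod_wt hn t ht h1' h3'
end

section
/- Let t = diag(a, a⁻¹, b, b⁻¹) be an invertible diagonal 4×4 complex matrix (an element of the maximal torus of Sp(4, ℂ)). Then conjugation Ad(t): X ↦ t·X·t⁻¹ maps the symplectic Lie algebra 𝔰𝔭(4, ℂ) into itself, and the induced linear automorphism of the 6-dimensional quotient vector space 𝔤𝔩(4, ℂ)/𝔰𝔭(4, ℂ) has determinant 1. (This is the paper's claim that the six remaining weight spaces of the restricted torus on 𝔤/𝔥 contribute trivially to the product of weights.) -/
open Matrix

/-- The symplectic Lie algebra `𝔰𝔭(4, ℂ) = {X : X·J₄ + J₄·Xᵀ = 0}` as a subspace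
of `𝔤𝔩(4, ℂ)`. -/
noncomputable def sp4 : Submodule ℂ (Matrix (Fin 4) (Fin 4) ℂ) where
  carrier := {X | X * J4 + J4 * Xᵀ = 0}
  zero_mem' := by simp
  add_mem' := by
    intro a b ha hb
    show (a + b) * J4 + J4 * (a + b)ᵀ = 0
    rw [Matrix.transpose_add, add_mul, mul_add]
    calc a * J4 + b * J4 + (J4 * aᵀ + J4 * bᵀ)
        = (a * J4 + J4 * aᵀ) + (b * J4 + J4 * bᵀ) := by abel
      _ = 0 := by rw [ha, hb, add_zero]
  smul_mem' := by
    intro c a ha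
    show (c • a) * J4 + J4 * (c • a)ᵀ = 0
    rw [Matrix.transpose_smul, Matrix.smul_mul, Matrix.mul_smul, ← smul_add, ha, smul_zero]

namespace Sp4Aux


lemma diag_eq (x y z w : ℂ) : Matrix.diagonal ![x,y,z,w]
    = !![x,0,0,0; 0,y,0,0; 0,0,z,0; 0,0,0,w] := by
  ext i j
  fin_cases i <;> fin_cases j <;>
    simp [Matrix.diagonal_apply, Matrix.vecHead, Matrix.vecTail]

noncomputable def M : Fin 6 → Matrix (Fin 4) (Fin 4) ℂ :=
  ![!![1,0,0,0; 0,1,0,0; 0,0,0,0; 0,0,0,0],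
    !![0,0,0,1; 0,0,0,0; 0,-1,0,0; 0,0,0,0],
    !![0,0,1,0; 0,0,0,0; 0,0,0,0; 0,1,0,0],
    !![0,0,0,0; 0,0,0,1; 1,0,0,0; 0,0,0,0],
    !![0,0,0,0; 0,0,1,0; 0,0,0,0; -1,0,0,0],
    !![0,0,0,0; 0,0,0,0; 0,0,1,0; 0,0,0,1]]

noncomputable def lam (a b : ℂ) : Fin 6 → ℂ :=
  ![1, a*b, a*b⁻¹, a⁻¹*b, a⁻¹*b⁻¹, 1]

section eig
variable (a b : ℂ) (ha : a ≠ 0) (hb : b ≠ 0)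
include ha hb

lemma eig0 : (Matrix.diagonal ![a, a⁻¹, b, b⁻¹]) *
      (!![(1:ℂ),0,0,0; 0,1,0,0; 0,0,0,0; 0,0,0,0] * Matrix.diagonal ![a⁻¹, a, b⁻¹, b])
    = ((1:ℂ)) • !![(1:ℂ),0,0,0; 0,1,0,0; 0,0,0,0; 0,0,0,0] := by
  rw [diag_eq, diag_eq]
  ext i j
  fin_cases i <;> fin_cases j <;>
    simp [Matrix.mul_apply, Fin.sum_univ_four, Matrix.vecHead, Matrix.vecTail] <;>
    (try field_simp) <;> (try ring)

lemma eig1 : (Matrix.diagonal ![a, a⁻¹, b, b⁻¹]) *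
      (!![(0:ℂ),0,0,1; 0,0,0,0; 0,-1,0,0; 0,0,0,0] * Matrix.diagonal ![a⁻¹, a, b⁻¹, b])
    = (a*b) • !![(0:ℂ),0,0,1; 0,0,0,0; 0,-1,0,0; 0,0,0,0] := by
  rw [diag_eq, diag_eq]
  ext i j
  fin_cases i <;> fin_cases j <;>
    simp [Matrix.mul_apply, Fin.sum_univ_four, Matrix.vecHead, Matrix.vecTail] <;>
    (try field_simp) <;> (try ring)

lemma eig2 : (Matrix.diagonal ![a, a⁻¹, b, b⁻¹]) *
      (!![(0:ℂ),0,1,0; 0,0,0,0; 0,0,0,0; 0,1,0,0] * Matrix.diagonal ![a⁻¹, a, b⁻¹, b])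
    = (a*b⁻¹) • !![(0:ℂ),0,1,0; 0,0,0,0; 0,0,0,0; 0,1,0,0] := by
  rw [diag_eq, diag_eq]
  ext i j
  fin_cases i <;> fin_cases j <;>
    simp [Matrix.mul_apply, Fin.sum_univ_four, Matrix.vecHead, Matrix.vecTail] <;>
    (try field_simp) <;> (try ring)

lemma eig3 : (Matrix.diagonal ![a, a⁻¹, b, b⁻¹]) *
      (!![(0:ℂ),0,0,0; 0,0,0,1; 1,0,0,0; 0,0,0,0] * Matrix.diagonal ![a⁻¹, a, b⁻¹, b])
    = (a⁻¹*b) • !![(0:ℂ),0,0,0; 0,0,0,1; 1,0,0,0; 0,0,0,0] := by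
  rw [diag_eq, diag_eq]
  ext i j
  fin_cases i <;> fin_cases j <;>
    simp [Matrix.mul_apply, Fin.sum_univ_four, Matrix.vecHead, Matrix.vecTail] <;>
    (try field_simp) <;> (try ring)

lemma eig4 : (Matrix.diagonal ![a, a⁻¹, b, b⁻¹]) *
      (!![(0:ℂ),0,0,0; 0,0,1,0; 0,0,0,0; -1,0,0,0] * Matrix.diagonal ![a⁻¹, a, b⁻¹, b])
    = (a⁻¹*b⁻¹) • !![(0:ℂ),0,0,0; 0,0,1,0; 0,0,0,0; -1,0,0,0] := by
  rw [diag_eq, diag_eq]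
  ext i j
  fin_cases i <;> fin_cases j <;>
    simp [Matrix.mul_apply, Fin.sum_univ_four, Matrix.vecHead, Matrix.vecTail] <;>
    (try field_simp) <;> (try ring)

lemma eig5 : (Matrix.diagonal ![a, a⁻¹, b, b⁻¹]) *
      (!![(0:ℂ),0,0,0; 0,0,0,0; 0,0,1,0; 0,0,0,1] * Matrix.diagonal ![a⁻¹, a, b⁻¹, b])
    = ((1:ℂ)) • !![(0:ℂ),0,0,0; 0,0,0,0; 0,0,1,0; 0,0,0,1] := by
  rw [diag_eq, diag_eq]
  ext i j
  fin_cases i <;> fin_cases j <;>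
    simp [Matrix.mul_apply, Fin.sum_univ_four, Matrix.vecHead, Matrix.vecTail] <;>
    (try field_simp) <;> (try ring)
lemma eig (k : Fin 6) :
    (Matrix.diagonal ![a, a⁻¹, b, b⁻¹]) * (M k * Matrix.diagonal ![a⁻¹, a, b⁻¹, b])
      = lam a b k • M k := by
  fin_cases k
  · exact eig0 a b ha hb
  · exact eig1 a b ha hb
  · exact eig2 a b ha hb
  · exact eig3 a b ha hb
  · exact eig4 a b ha hb
  · exact eig5 a b ha hb

end eig


lemma swapJ (a b : ℂ) :
    (Matrix.diagonal ![a⁻¹, a, b⁻¹, b]) * J4 = J4 * (Matrix.diagonal ![a, a⁻¹, b, b⁻¹]) := by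
  rw [diag_eq, diag_eq]
  ext i j
  fin_cases i <;> fin_cases j <;>
    simp [J4, Matrix.mul_apply, Fin.sum_univ_four, Matrix.vecHead, Matrix.vecTail]

lemma swapJ' (a b : ℂ) :
    J4 * (Matrix.diagonal ![a⁻¹, a, b⁻¹, b]) = (Matrix.diagonal ![a, a⁻¹, b, b⁻¹]) * J4 := by
  rw [diag_eq, diag_eq]
  ext i j
  fin_cases i <;> fin_cases j <;>
    simp [J4, Matrix.mul_apply, Fin.sum_univ_four, Matrix.vecHead, Matrix.vecTail]

lemma conj_mem (a b : ℂ) (X : Matrix (Fin 4) (Fin 4) ℂ)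
    (hX : X * J4 + J4 * Xᵀ = 0) :
    (Matrix.diagonal ![a, a⁻¹, b, b⁻¹]) * (X * Matrix.diagonal ![a⁻¹, a, b⁻¹, b]) * J4
      + J4 * ((Matrix.diagonal ![a, a⁻¹, b, b⁻¹]) * (X * Matrix.diagonal ![a⁻¹, a, b⁻¹, b]))ᵀ
      = 0 := by
  set T := Matrix.diagonal ![a, a⁻¹, b, b⁻¹] with hT
  set T' := Matrix.diagonal ![a⁻¹, a, b⁻¹, b] with hT'
  have e1 : T * (X * T') * J4 = T * (X * J4) * T := by
    rw [mul_assoc T, mul_assoc X, swapJ, ← mul_assoc X, ← mul_assoc T]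
  have e2 : J4 * (T * (X * T'))ᵀ = T * (J4 * Xᵀ) * T := by
    rw [Matrix.transpose_mul, Matrix.transpose_mul, Matrix.diagonal_transpose,
      Matrix.diagonal_transpose, ← hT, ← hT', ← mul_assoc, ← mul_assoc, swapJ', mul_assoc T J4,
      mul_assoc T]
  rw [e1, e2, ← add_mul, ← mul_add, hX, mul_zero, zero_mul]

end Sp4Aux

namespace Sp4Aux

lemma mem_sp4 (X : Matrix (Fin 4) (Fin 4) ℂ) : X ∈ sp4 ↔ X * J4 + J4 * Xᵀ = 0 := Iff.rfl

/-- images of the `M k` in the quotient -/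
noncomputable def v : Fin 6 → (Matrix (Fin 4) (Fin 4) ℂ ⧸ sp4) :=
  fun k => Submodule.Quotient.mk (M k)

set_option maxHeartbeats 1600000 in
lemma sum_smul_M (g : Fin 6 → ℂ) :
    (∑ i : Fin 6, g i • M i) =
      !![g 0, 0, g 2, g 1; 0, g 0, g 4, g 3; g 3, -g 1, g 5, 0; -g 4, g 2, 0, g 5] := by
  rw [Fin.sum_univ_six]
  rw [show M 0 = !![(1:ℂ),0,0,0; 0,1,0,0; 0,0,0,0; 0,0,0,0] from rfl,
    show M 1 = !![(0:ℂ),0,0,1; 0,0,0,0; 0,-1,0,0; 0,0,0,0] from rfl,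
    show M 2 = !![(0:ℂ),0,1,0; 0,0,0,0; 0,0,0,0; 0,1,0,0] from rfl,
    show M 3 = !![(0:ℂ),0,0,0; 0,0,0,1; 1,0,0,0; 0,0,0,0] from rfl,
    show M 4 = !![(0:ℂ),0,0,0; 0,0,1,0; 0,0,0,0; -1,0,0,0] from rfl,
    show M 5 = !![(0:ℂ),0,0,0; 0,0,0,0; 0,0,1,0; 0,0,0,1] from rfl]
  ext i j
  fin_cases i <;> fin_cases j <;>
    simp [Matrix.vecHead, Matrix.vecTail]

lemma indep : LinearIndependent ℂ v := by
  rw [Fintype.linearIndependent_iff]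
  intro g hg
  have hmk : sp4.mkQ (∑ i : Fin 6, g i • M i) = 0 := by
    rw [map_sum]
    simpa [v, Submodule.mkQ_apply] using hg
  rw [Submodule.mkQ_apply, Submodule.Quotient.mk_eq_zero, sum_smul_M, mem_sp4] at hmk
  intro k
  fin_cases k
  · have h01 := congrFun (congrFun hmk 0) 1
    simp [J4, Matrix.mul_apply, Fin.sum_univ_four, Matrix.vecHead, Matrix.vecTail, Matrix.vecMul, dotProduct] at h01
    exact h01
  · have h02 := congrFun (congrFun hmk 0) 2
    simp [J4, Matrix.mul_apply, Fin.sum_univ_four, Matrix.vecHead, Matrix.vecTail, Matrix.vecMul, dotProduct] at h02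
    exact h02
  · have h03 := congrFun (congrFun hmk 0) 3
    simp [J4, Matrix.mul_apply, Fin.sum_univ_four, Matrix.vecHead, Matrix.vecTail, Matrix.vecMul, dotProduct] at h03
    exact h03
  · have h12 := congrFun (congrFun hmk 1) 2
    simp [J4, Matrix.mul_apply, Fin.sum_univ_four, Matrix.vecHead, Matrix.vecTail, Matrix.vecMul, dotProduct] at h12
    exact h12
  · have h13 := congrFun (congrFun hmk 1) 3
    simp [J4, Matrix.mul_apply, Fin.sum_univ_four, Matrix.vecHead, Matrix.vecTail, Matrix.vecMul, dotProduct] at h13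
    exact h13
  · have h23 := congrFun (congrFun hmk 2) 3
    simp [J4, Matrix.mul_apply, Fin.sum_univ_four, Matrix.vecHead, Matrix.vecTail, Matrix.vecMul, dotProduct] at h23
    exact h23


lemma vec6_four {α : Type*} (v0 v1 v2 v3 v4 v5 : α) : ![v0,v1,v2,v3,v4,v5] 4 = v4 := rfl
lemma vec6_five {α : Type*} (v0 v1 v2 v3 v4 v5 : α) : ![v0,v1,v2,v3,v4,v5] 5 = v5 := rfl

set_option maxHeartbeats 1600000 in
lemma span_top : ⊤ ≤ Submodule.span ℂ (Set.range v) := by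
  rintro x -
  obtain ⟨X, rfl⟩ := Submodule.mkQ_surjective sp4 x
  set c : Fin 6 → ℂ := ![(X 0 0 + X 1 1)/2, (X 0 3 - X 2 1)/2, (X 0 2 + X 3 1)/2,
    (X 1 3 + X 2 0)/2, (X 1 2 - X 3 0)/2, (X 2 2 + X 3 3)/2] with hc
  have hmem : X - ∑ i : Fin 6, c i • M i ∈ sp4 := by
    rw [mem_sp4, sum_smul_M]
    ext i j
    fin_cases i <;> fin_cases j <;>
      · simp [hc, J4, Matrix.mul_apply, Fin.sum_univ_four, Matrix.vecHead, Matrix.vecTail,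
          Matrix.sub_apply, Matrix.vecMul, dotProduct, Matrix.transpose_apply,
          vec6_four, vec6_five]
        try ring
  have hrepr : sp4.mkQ X = ∑ i : Fin 6, c i • v i := by
    have h0 : sp4.mkQ (X - ∑ i : Fin 6, c i • M i) = 0 := by
      rw [Submodule.mkQ_apply, Submodule.Quotient.mk_eq_zero]; exact hmem
    rw [map_sub, sub_eq_zero, map_sum] at h0
    rw [h0]
    simp [v, Submodule.mkQ_apply]
  rw [hrepr]
  exact Submodule.sum_smul_mem _ c (fun k _ => Submodule.subset_span ⟨k, rfl⟩)

/-- The resulting basis of the quotient. -/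
noncomputable def B : Module.Basis (Fin 6) ℂ (Matrix (Fin 4) (Fin 4) ℂ ⧸ sp4) :=
  Module.Basis.mk indep span_top

end Sp4Aux

/-- For `t = diag(a, a⁻¹, b, b⁻¹)` in the maximal torus of `Sp(4, ℂ)`, conjugation
`Ad(t) : X ↦ t·X·t⁻¹` maps `𝔰𝔭(4, ℂ)` into itself, and the induced linear
automorphism of the `6`-dimensional quotient `𝔤𝔩(4, ℂ)/𝔰𝔭(4, ℂ)` has determinant `1`. -/
theorem det_symplectic_torus_on_gl4_mod_sp4_eq_one
    (a b : ℂ) (ha : a ≠ 0) (hb : b ≠ 0) :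
    ∃ h : sp4 ≤ sp4.comap
        ((LinearMap.mulLeft ℂ (Matrix.diagonal ![a, a⁻¹, b, b⁻¹])).comp
          (LinearMap.mulRight ℂ (Matrix.diagonal ![a⁻¹, a, b⁻¹, b]))),
      Module.finrank ℂ (Matrix (Fin 4) (Fin 4) ℂ ⧸ sp4) = 6 ∧
      LinearMap.det (sp4.mapQ sp4
          ((LinearMap.mulLeft ℂ (Matrix.diagonal ![a, a⁻¹, b, b⁻¹])).comp
            (LinearMap.mulRight ℂ (Matrix.diagonal ![a⁻¹, a, b⁻¹, b]))) h) = 1 := by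
  set f := ((LinearMap.mulLeft ℂ (Matrix.diagonal ![a, a⁻¹, b, b⁻¹])).comp
      (LinearMap.mulRight ℂ (Matrix.diagonal ![a⁻¹, a, b⁻¹, b]))) with hf
  have happ : ∀ X, f X = (Matrix.diagonal ![a, a⁻¹, b, b⁻¹]) *
      (X * Matrix.diagonal ![a⁻¹, a, b⁻¹, b]) := by
    intro X
    simp [hf, LinearMap.mulLeft_apply, LinearMap.mulRight_apply]
  have hinv : sp4 ≤ sp4.comap f := by
    intro X hX
    rw [Submodule.mem_comap, Sp4Aux.mem_sp4, happ]
    exact Sp4Aux.conj_mem a b X hX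
  refine ⟨hinv, ?_, ?_⟩
  · rw [Module.finrank_eq_card_basis Sp4Aux.B, Fintype.card_fin]
  · have hFv : ∀ k, (sp4.mapQ sp4 f hinv) (Sp4Aux.v k)
        = Sp4Aux.lam a b k • Sp4Aux.v k := by
      intro k
      show (sp4.mapQ sp4 f hinv) (Submodule.Quotient.mk (Sp4Aux.M k)) = _
      rw [Submodule.mapQ_apply, happ, Sp4Aux.eig a b ha hb k, Submodule.Quotient.mk_smul]
      rfl
    have hmat : LinearMap.toMatrix Sp4Aux.B Sp4Aux.B (sp4.mapQ sp4 f hinv)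
        = Matrix.diagonal (Sp4Aux.lam a b) := by
      ext i j
      rw [LinearMap.toMatrix_apply, show Sp4Aux.B j = Sp4Aux.v j from
        Module.Basis.mk_apply Sp4Aux.indep Sp4Aux.span_top j, hFv j, _root_.map_smul, Finsupp.smul_apply]
      have hrep : Sp4Aux.B.repr (Sp4Aux.v j) = Finsupp.single j 1 := by
        rw [← Module.Basis.mk_apply Sp4Aux.indep Sp4Aux.span_top j]
        exact Sp4Aux.B.repr_self j
      rw [hrep]
      by_cases hij : i = j
      · subst hij; simp [Matrix.diagonal_apply]
      · simp [Finsupp.single_apply, Matrix.diagonal_apply, hij, Ne.symm hij]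
    rw [← LinearMap.det_toMatrix Sp4Aux.B, hmat, Matrix.det_diagonal, Fin.prod_univ_six]
    show (1:ℂ) * (a*b) * (a*b⁻¹) * (a⁻¹*b) * (a⁻¹*b⁻¹) * 1 = 1
    field_simp
end
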